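/- Assume m ≥ n+1. For any nonzero homogeneous f_1,…,f_m (no SNC hypothesis), the determinantal ideal is contained in the likelihood ideal: I_{m+1}(Q^s_{∖1}) + ⟨Σ_{i=1}^m d_i·s_i⟩ ⊆ I_A. -/
import Mathlib


open MvPolynomial

noncomputable section

/-- The polynomial ring `R = ℂ[x_1,…,x_n]`. -/
abbrev Rp (n : ℕ) := MvPolynomial (Fin n) ℂ

/-- The polynomial ring `S = ℂ[s_1,…,s_m,x_1,…,x_n]`; `Sum.inl i ↦ s_i`, `Sum.inr j ↦ x_j`. -/
abbrev Sp (n m : ℕ) := MvPolynomial (Fin m ⊕ Fin n) ℂ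

/-- The inclusion `R ⊆ S`. -/
def toS (n m : ℕ) : Rp n →ₐ[ℂ] Sp n m := rename Sum.inr

/-- Column index set for `Q_{∖1}`: diagonal columns `2,…,m` and the `n` Jacobian columns. -/
abbrev Col (n m : ℕ) := {k : Fin m // (k : ℕ) ≠ 0} ⊕ Fin n

/-- The SNC (strict normal crossing) hypothesis, via the Jacobian criterion. -/
def SNC (n m : ℕ) (f : Fin m → Rp n) : Prop :=
  (∀ i, Irreducible (f i)) ∧
  ∀ I : Finset (Fin m), 1 ≤ I.card → I.card ≤ n →
    ∀ p : Fin n → ℂ, p ≠ 0 → (∀ i ∈ I, eval p (f i) = 0) →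
      (Matrix.of fun (i : I) (j : Fin n) => eval p (pderiv j (f i.1))).rank = I.card

/-- The matrix `Q = (diag(f_1,…,f_m) | J_f)`. -/
def Qmat (n m : ℕ) (f : Fin m → Rp n) : Matrix (Fin m) (Fin m ⊕ Fin n) (Rp n) :=
  Matrix.of fun i => Sum.elim (fun k => if i = k then f i else 0) (fun j => pderiv j (f i))

/-- The matrix `Q_{∖1}`, obtained from `Q` by deleting the first column. -/
def Q1 (n m : ℕ) (f : Fin m → Rp n) : Matrix (Fin m) (Col n m) (Rp n) :=
  Matrix.of fun i => Sum.elim (fun k => if i = (k : Fin m) then f i else 0)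
    (fun j => pderiv j (f i))

/-- The matrix `Q^s_{∖1}`: `Q_{∖1}` (over `S`) with the row `(s_2,…,s_m,0,…,0)` appended. -/
def Qs1 (n m : ℕ) (f : Fin m → Rp n) : Matrix (Option (Fin m)) (Col n m) (Sp n m) :=
  Matrix.of fun i? c =>
    i?.elim (Sum.elim (fun k : {k : Fin m // (k : ℕ) ≠ 0} => (X (Sum.inl (k : Fin m)) : Sp n m)) (fun _ : Fin n => (0 : Sp n m)) c)
      (fun i => toS n m (Q1 n m f i c))

/-- The ideal generated by all `k × k` minors of a matrix. -/
def minorsIdeal {A : Type*} [CommRing A] {ι κ : Type*} (k : ℕ) (M : Matrix ι κ A) : Ideal A :=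
  Ideal.span {x | ∃ r : Fin k → ι, ∃ c : Fin k → κ,
    Function.Injective r ∧ Function.Injective c ∧ x = (M.submatrix r c).det}

/-- `h_j = Σ_i s_i·(Π_{k≠i} f_k)·∂f_i/∂x_j`. -/
def hpoly (n m : ℕ) (f : Fin m → Rp n) (j : Fin n) : Sp n m :=
  ∑ i, X (Sum.inl i) * toS n m (((Finset.univ.erase i).prod f) * pderiv j (f i))

/-- The linear form `Σ_i d_i·s_i`. -/
def linForm (n m : ℕ) (d : Fin m → ℕ) : Sp n m := ∑ i, (d i : Sp n m) * X (Sum.inl i)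

/-- The likelihood ideal `I_A`: contraction to `S` of the ideal `⟨h_1,…,h_n⟩` of `S_f`. -/
def IA (n m : ℕ) (f : Fin m → Rp n) : Ideal (Sp n m) :=
  (Ideal.span (Set.range fun j =>
      algebraMap (Sp n m) (Localization.Away (toS n m (∏ i, f i))) (hpoly n m f j))).comap
    (algebraMap (Sp n m) (Localization.Away (toS n m (∏ i, f i))))

/- ### Auxiliary lemmas -/

lemma X_mul_pderiv_monomial {n : ℕ} (j : Fin n) (v : Fin n →₀ ℕ) (a : ℂ) :
    X j * pderiv j (monomial v a) = (v j) • monomial v a := by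
  rw [pderiv_monomial]
  by_cases h : v j = 0
  · simp [h]
  · rw [X, monomial_mul, one_mul]
    rw [add_tsub_cancel_of_le (by rwa [Finsupp.single_le_iff, Nat.one_le_iff_ne_zero])]
    rw [smul_monomial, nsmul_eq_mul, mul_comm]

/-- Euler's identity for homogeneous polynomials. -/
lemma euler_identity {n : ℕ} {g : Rp n} {d : ℕ} (hg : g.IsHomogeneous d) :
    ∑ j : Fin n, X j * pderiv j g = d • g := by
  have key : ∀ v ∈ g.support, ∑ j : Fin n, X j * pderiv j (monomial v (coeff v g)) =
      d • monomial v (coeff v g) := by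
    intro v hv
    have hdeg : ∑ j : Fin n, v j = d := by
      have h1 := hg (mem_support_iff.mp hv)
      rw [Finsupp.weight_apply, Finsupp.sum_fintype _ _ (fun i => by simp)] at h1
      simpa using h1
    simp_rw [X_mul_pderiv_monomial]
    rw [← Finset.sum_smul, hdeg]
  calc ∑ j : Fin n, X j * pderiv j g
      = ∑ j : Fin n, ∑ v ∈ g.support, X j * pderiv j (monomial v (coeff v g)) := by
        refine Finset.sum_congr rfl fun j _ => ?_
        conv_lhs => rw [← support_sum_monomial_coeff g]
        rw [map_sum, Finset.mul_sum]
    _ = ∑ v ∈ g.support, ∑ j : Fin n, X j * pderiv j (monomial v (coeff v g)) :=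
        Finset.sum_comm
    _ = ∑ v ∈ g.support, d • monomial v (coeff v g) := Finset.sum_congr rfl key
    _ = d • g := by rw [← Finset.smul_sum, support_sum_monomial_coeff]

/-- If `f·x` lies in the (polynomial) ideal generated by the `h_j`'s, then `x ∈ I_A`. -/
lemma mem_IA_of_mul {n m : ℕ} (f : Fin m → Rp n) (x : Sp n m)
    (hx : toS n m (∏ i, f i) * x ∈ Ideal.span (Set.range (hpoly n m f))) :
    x ∈ IA n m f := by
  set L := Localization.Away (toS n m (∏ i, f i))
  rw [IA, Ideal.mem_comap]
  obtain ⟨u, hu⟩ : IsUnit (algebraMap (Sp n m) L (toS n m (∏ i, f i))) :=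
    IsLocalization.Away.algebraMap_isUnit _
  have h2 : algebraMap (Sp n m) L (toS n m (∏ i, f i) * x) ∈
      Ideal.span (Set.range fun j => algebraMap (Sp n m) L (hpoly n m f j)) := by
    have h3 := Ideal.mem_map_of_mem (algebraMap (Sp n m) L) hx
    rwa [Ideal.map_span, ← Set.range_comp] at h3
  rw [map_mul, ← hu] at h2
  have h4 : algebraMap (Sp n m) L x =
      ↑u⁻¹ * (↑u * algebraMap (Sp n m) L x) := by rw [Units.inv_mul_cancel_left]
  rw [h4]
  exact Ideal.mul_mem_left _ _ h2

/-- If all entries of some row lie in an ideal, so does the determinant. -/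
lemma det_mem_of_row_mem {ι : Type*} [DecidableEq ι] [Fintype ι] {A : Type*} [CommRing A]
    (N : Matrix ι ι A) (I : Ideal A) (i0 : ι) (h : ∀ c, N i0 c ∈ I) : N.det ∈ I := by
  rw [Matrix.det_apply]
  refine Ideal.sum_mem _ fun σ _ => ?_
  rw [Units.smul_def, zsmul_eq_mul]
  refine Ideal.mul_mem_left _ _ ?_
  rw [← Finset.mul_prod_erase Finset.univ _ (Finset.mem_univ (σ⁻¹ i0))]
  refine Ideal.mul_mem_right _ _ ?_
  simpa using h (σ⁻¹ i0)

/-- The fundamental row relation: `f · (last row of Q^s_{∖1}) + (0,…,0,h_1,…,h_n)` equals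
the combination `Σ_i s_i (Π_{k≠i} f_k) · (row i of Q^s_{∖1})`. -/
lemma key_row {n m : ℕ} (f : Fin m → Rp n) (c : Col n m) :
    toS n m (∏ i, f i) * Qs1 n m f none c +
      Sum.elim (fun _ => (0 : Sp n m)) (hpoly n m f) c =
    ∑ i : Fin m, (X (Sum.inl i) * toS n m ((Finset.univ.erase i).prod f)) *
      Qs1 n m f (some i) c := by
  cases c with
  | inl k =>
    simp only [Qs1, Q1, Matrix.of_apply, Option.elim, Sum.elim_inl, add_zero]
    rw [Finset.sum_eq_single (k : Fin m)]
    · rw [if_pos rfl, mul_assoc, ← map_mul, Finset.prod_erase_mul _ _ (Finset.mem_univ _)]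
      ring
    · intro b _ hb
      rw [if_neg hb, map_zero, mul_zero]
    · simp
  | inr j =>
    simp only [Qs1, Q1, Matrix.of_apply, Option.elim, Sum.elim_inr, mul_zero, zero_add,
      hpoly, map_mul, mul_assoc]

/-- Without any SNC hypothesis, the determinantal ideal is contained in
the likelihood ideal. -/
theorem determinantal_ideal_le_likelihood_ideal (n m : ℕ) (hn : 2 ≤ n) (hm : n + 1 ≤ m)
    (f : Fin m → Rp n) (d : Fin m → ℕ)
    (hf0 : ∀ i, f i ≠ 0) (hfh : ∀ i, (f i).IsHomogeneous (d i)) (hd : ∀ i, 1 ≤ d i) :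
    minorsIdeal (m + 1) (Qs1 n m f) + Ideal.span {linForm n m d} ≤ IA n m f := by
  rw [Ideal.add_eq_sup, sup_le_iff]
  constructor
  · -- minors
    rw [minorsIdeal, Ideal.span_le]
    rintro x ⟨r, c, hr, hc, rfl⟩
    have hrb : Function.Bijective r :=
      (Fintype.bijective_iff_injective_and_card r).2 ⟨hr, by simp⟩
    set e := Equiv.ofBijective r hrb with he
    set i0 := e.symm none with hi0
    have hri0 : r i0 = none := e.apply_symm_apply none
    set M := (Qs1 n m f).submatrix r c with hM
    set g : Fin m → Sp n m :=
      fun i => X (Sum.inl i) * toS n m ((Finset.univ.erase i).prod f) with hg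
    set c' : Fin (m + 1) → Sp n m := fun k => (r k).elim 0 g with hc'
    have hc'0 : c' i0 = 0 := by simp [hc', hri0]
    set w : Fin (m + 1) → Sp n m :=
      fun cc => Sum.elim (fun _ => (0 : Sp n m)) (hpoly n m f) (c cc) with hw
    have hrow : (toS n m (∏ i, f i) • M i0 + w) = ∑ k, c' k • M k := by
      funext cc
      have h1 : (∑ k, c' k • M k) cc = ∑ k, c' k * M k cc := by
        simp [Finset.sum_apply]
      rw [h1]
      have h2 : ∑ k, c' k * M k cc =
          ∑ o : Option (Fin m), o.elim 0 g * Qs1 n m f o (c cc) :=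
        Fintype.sum_equiv e _ _ fun k => by simp [hc', hM, he, Equiv.ofBijective]
      rw [h2, Fintype.sum_option]
      simp only [Option.elim, zero_mul, zero_add]
      have h3 := key_row f (c cc)
      simp only [Pi.add_apply, Pi.smul_apply, smul_eq_mul, hw, hM,
        Matrix.submatrix_apply, hri0]
      rw [h3]
    apply mem_IA_of_mul
    have hdet : toS n m (∏ i, f i) * M.det + (M.updateRow i0 w).det = 0 := by
      have h1 : toS n m (∏ i, f i) * M.det = (M.updateRow i0 (toS n m (∏ i, f i) • M i0)).det := by
        rw [Matrix.det_updateRow_smul, Matrix.updateRow_eq_self]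
      rw [h1, ← Matrix.det_updateRow_add, hrow, Matrix.det_updateRow_sum, hc'0, zero_smul]
    have h5 : toS n m (∏ i, f i) * M.det = -(M.updateRow i0 w).det :=
      eq_neg_of_add_eq_zero_left hdet
    rw [h5]
    refine neg_mem (det_mem_of_row_mem _ _ i0 fun cc => ?_)
    rw [Matrix.updateRow_self]
    rcases hcc : c cc with k | j
    · simp [hw, hcc]
    · simp only [hw, hcc, Sum.elim_inr]
      exact Ideal.subset_span ⟨j, rfl⟩
  · -- linear form
    rw [Ideal.span_le, Set.singleton_subset_iff]
    apply mem_IA_of_mul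
    have hid : toS n m (∏ i, f i) * linForm n m d = ∑ j, X (Sum.inr j) * hpoly n m f j := by
      rw [eq_comm]
      calc ∑ j, X (Sum.inr j) * hpoly n m f j
          = ∑ i, X (Sum.inl i) *
              toS n m ((Finset.univ.erase i).prod f * ∑ j, X j * pderiv j (f i)) := by
            simp only [hpoly, Finset.mul_sum]
            rw [Finset.sum_comm]
            refine Finset.sum_congr rfl fun i _ => ?_
            rw [map_sum, Finset.mul_sum]
            refine Finset.sum_congr rfl fun j _ => ?_
            rw [map_mul, map_mul, map_mul]
            have hX : (toS n m) (X j) = X (Sum.inr j) := rename_X _ _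
            rw [hX]; ring
        _ = ∑ i, X (Sum.inl i) * toS n m ((Finset.univ.erase i).prod f * (d i • f i)) := by
            refine Finset.sum_congr rfl fun i _ => ?_
            rw [euler_identity (hfh i)]
        _ = toS n m (∏ i, f i) * linForm n m d := by
            rw [linForm, Finset.mul_sum]
            refine Finset.sum_congr rfl fun i _ => ?_
            rw [mul_smul_comm, map_nsmul,
              Finset.prod_erase_mul _ _ (Finset.mem_univ i), nsmul_eq_mul]
            ring
    rw [hid]
    exact Ideal.sum_mem _ fun j _ =>
      Ideal.mul_mem_left _ _ (Ideal.subset_span ⟨j, rfl⟩)
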